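/- Under random censoring (C independent of T and Z, with S_C(t) = P(C ≥ t)), the risk-set average e(t) := E[Z 1(T∧C ≥ t)] / E[1(T∧C ≥ t)] equals the censoring-free average ẽ(t) := E[Z P(T ≥ t | Z)] / E[P(T ≥ t | Z)], for all t with E[1(T∧C≥t)] > 0. -/

import Mathlib

open MeasureTheory ProbabilityTheory

/-- Under random censoring, the risk-set average `e(t) = E[Z 1(T∧C ≥ t)]/E[1(T∧C ≥ t)]`
equals the censoring-free average `ẽ(t) = E[Z P(T ≥ t|Z)]/E[P(T ≥ t|Z)]` whenever
`E[1(T∧C ≥ t)] > 0`. -/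
theorem stmt_11 {Ω : Type*} [MeasureSpace Ω] [IsProbabilityMeasure (ℙ : Measure Ω)]
    (Z T C : Ω → ℝ) (hZm : Measurable Z) (hTm : Measurable T) (hCm : Measurable C)
    (hZint : Integrable Z ℙ)
    (hindep : IndepFun C (fun ω => (T ω, Z ω)) ℙ)
    (ST : ℝ → Ω → ℝ)
    (hST : ∀ t : ℝ, ST t =ᵐ[ℙ]
      ℙ[Set.indicator {ω | t ≤ T ω} (fun _ => (1 : ℝ)) |
        MeasurableSpace.comap Z Real.measurableSpace])
    (hSTint : ∀ t, Integrable (fun ω => Z ω * ST t ω) ℙ) :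
    ∀ t : ℝ, 0 < (∫ ω, if t ≤ min (T ω) (C ω) then (1 : ℝ) else 0) →
      (∫ ω, Z ω * (if t ≤ min (T ω) (C ω) then (1 : ℝ) else 0)) /
          (∫ ω, if t ≤ min (T ω) (C ω) then (1 : ℝ) else 0) =
        (∫ ω, Z ω * ST t ω) / (∫ ω, ST t ω) := by
  intro t hpos
  have hm : MeasurableSpace.comap Z Real.measurableSpace
      ≤ (MeasureSpace.toMeasurableSpace : MeasurableSpace Ω) := hZm.comap_le
  set G : Ω → ℝ := Set.indicator {ω | t ≤ T ω} (fun _ => (1 : ℝ)) with hG_def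
  set h : Ω → ℝ := fun ω => if t ≤ C ω then 1 else 0 with hh_def
  have hGeq : ∀ ω, G ω = if t ≤ T ω then 1 else 0 := by
    intro ω; simp [hG_def, Set.indicator_apply]
  have hsetT : MeasurableSet {ω | t ≤ T ω} := hTm measurableSet_Ici
  have hGint : Integrable G ℙ := (integrable_const 1).indicator hsetT
  have hZGint : Integrable (fun ω => Z ω * G ω) ℙ := by
    have : (fun ω => Z ω * G ω) = Set.indicator {ω | t ≤ T ω} Z := by
      funext ω; rw [hGeq ω]; by_cases hω : t ≤ T ω <;> simp [Set.indicator_apply, hω]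
    rw [this]; exact hZint.indicator hsetT
  have hZsm : StronglyMeasurable[MeasurableSpace.comap Z Real.measurableSpace] Z :=
    Measurable.stronglyMeasurable (fun s hs => ⟨s, hs, rfl⟩)
  -- (1): ∫ ST t = ∫ G
  have h1 : ∫ ω, ST t ω = ∫ ω, G ω := by
    rw [integral_congr_ae (hST t)]
    exact integral_condExp hm
  -- (2): ∫ Z * ST t = ∫ Z * G
  have h2 : ∫ ω, Z ω * ST t ω = ∫ ω, Z ω * G ω := by
    have e1 : (fun ω => Z ω * ST t ω) =ᵐ[ℙ]
        (fun ω => Z ω * (ℙ[G | MeasurableSpace.comap Z Real.measurableSpace]) ω) := by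
      filter_upwards [hST t] with ω hω; rw [hω]
    have e2 : ℙ[fun ω => Z ω * G ω | MeasurableSpace.comap Z Real.measurableSpace]
        =ᵐ[ℙ] fun ω => Z ω * (ℙ[G | MeasurableSpace.comap Z Real.measurableSpace]) ω := by
      have := condExp_mul_of_stronglyMeasurable_left (μ := ℙ) hZsm
        (by exact hZGint) hGint
      filter_upwards [this] with ω hω
      exact hω
    calc ∫ ω, Z ω * ST t ω
        = ∫ ω, Z ω * (ℙ[G | MeasurableSpace.comap Z Real.measurableSpace]) ω :=
          integral_congr_ae e1
      _ = ∫ ω, (ℙ[fun ω => Z ω * G ω | MeasurableSpace.comap Z Real.measurableSpace]) ω :=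
          (integral_congr_ae e2).symm
      _ = ∫ ω, Z ω * G ω := integral_condExp hm
  -- independence factorization
  have hφ : Measurable (fun c : ℝ => if t ≤ c then (1:ℝ) else 0) :=
    Measurable.ite measurableSet_Ici measurable_const measurable_const
  have hψ1 : Measurable (fun p : ℝ × ℝ => if t ≤ p.1 then (1:ℝ) else 0) :=
    Measurable.ite (measurable_fst measurableSet_Ici) measurable_const measurable_const
  have hψ2 : Measurable (fun p : ℝ × ℝ => p.2 * (if t ≤ p.1 then (1:ℝ) else 0)) :=
    measurable_snd.mul hψ1
  have hind1 : IndepFun h (fun ω => if t ≤ T ω then (1:ℝ) else 0) ℙ := hindep.comp hφ hψ1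
  have hind1' : IndepFun h G ℙ := by
    have : G = fun ω => if t ≤ T ω then (1:ℝ) else 0 := funext hGeq
    rw [this]; exact hind1
  have hind2 : IndepFun h (fun ω => Z ω * (if t ≤ T ω then (1:ℝ) else 0)) ℙ :=
    hindep.comp hφ hψ2
  have hind2' : IndepFun h (fun ω => Z ω * G ω) ℙ := by
    have : (fun ω => Z ω * G ω) = fun ω => Z ω * (if t ≤ T ω then (1:ℝ) else 0) := by
      funext ω; rw [hGeq ω]
    rw [this]; exact hind2
  have hhint : Integrable h ℙ := by
    have : h = Set.indicator {ω | t ≤ C ω} (fun _ => (1 : ℝ)) := by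
      funext ω; simp [hh_def, Set.indicator_apply]
    rw [this]; exact (integrable_const 1).indicator (hCm measurableSet_Ici)
  have hmin : ∀ ω, (if t ≤ min (T ω) (C ω) then (1:ℝ) else 0) = h ω * G ω := by
    intro ω
    rw [hGeq ω]
    simp only [hh_def, le_min_iff]
    by_cases h1 : t ≤ T ω <;> by_cases h2 : t ≤ C ω <;> simp [h1, h2]
  have hden : ∫ ω, (if t ≤ min (T ω) (C ω) then (1:ℝ) else 0)
      = (∫ ω, h ω) * ∫ ω, G ω := by
    rw [show (fun ω => if t ≤ min (T ω) (C ω) then (1:ℝ) else 0) = fun ω => h ω * G ω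
      from funext hmin]
    exact hind1'.integral_mul_eq_mul_integral hhint.aestronglyMeasurable hGint.aestronglyMeasurable
  have hnum : ∫ ω, Z ω * (if t ≤ min (T ω) (C ω) then (1:ℝ) else 0)
      = (∫ ω, h ω) * ∫ ω, Z ω * G ω := by
    have : (fun ω => Z ω * (if t ≤ min (T ω) (C ω) then (1:ℝ) else 0))
        = fun ω => h ω * (Z ω * G ω) := by
      funext ω; rw [hmin ω]; ring
    rw [this]
    exact hind2'.integral_mul_eq_mul_integral hhint.aestronglyMeasurable hZGint.aestronglyMeasurable
  have hc : (∫ ω, h ω) ≠ 0 := by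
    intro h0
    rw [hden, h0, zero_mul] at hpos
    exact lt_irrefl _ hpos
  rw [hnum, hden, mul_div_mul_left _ _ hc, h1, h2]
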